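/- The closure (in ℝ^{p−1} × ℝ^{q−1} × ℝ) of the complement C ∖ f_1(C) equals E = {(x,y,z) ∈ C : z ≥ 1/2 + (x_1 + ⋯ + x_{p−1})/2}, equivalently E = {(x,y,z) ∈ C : x_1 + ⋯ + x_{p−1} + 2(1 − z) ≤ 1}. -/
import Mathlib


open Set

/-- The set `C = Δ^{p-1} × [0,1]^{q-1} × [0,1] ⊆ ℝ^{p-1} × ℝ^{q-1} × ℝ`. -/
def Cset (p q : ℕ) : Set ((Fin (p - 1) → ℝ) × (Fin (q - 1) → ℝ) × ℝ) :=
  {v | (∀ i, 0 ≤ v.1 i) ∧ (∑ i, v.1 i) ≤ 1 ∧ (∀ j, v.2.1 j ∈ Icc (0 : ℝ) 1) ∧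
    v.2.2 ∈ Icc (0 : ℝ) 1}

/-- The map `f_t(x,y,z) = (x, y, z(1 + (x₁ + ⋯ + x_{p-1} - 1)t/2))`. -/
noncomputable def fmap (p q : ℕ) (t : ℝ)
    (v : (Fin (p - 1) → ℝ) × (Fin (q - 1) → ℝ) × ℝ) :
    (Fin (p - 1) → ℝ) × (Fin (q - 1) → ℝ) × ℝ :=
  (v.1, v.2.1, v.2.2 * (1 + ((∑ i, v.1 i) - 1) * t / 2))

/-- The closure of `C \ f₁(C)` equals `E = {(x,y,z) ∈ C : z ≥ 1/2 + (x₁+⋯+x_{p-1})/2}`,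
which equals `{(x,y,z) ∈ C : x₁+⋯+x_{p-1} + 2(1-z) ≤ 1}`. -/
theorem closure_complement_fmap_one (p q : ℕ) (hp : 1 ≤ p) (hq : 1 ≤ q) :
    closure (Cset p q \ (fmap p q 1 '' Cset p q)) =
      {v ∈ Cset p q | 1 / 2 + (∑ i, v.1 i) / 2 ≤ v.2.2} ∧
    {v ∈ Cset p q | 1 / 2 + (∑ i, v.1 i) / 2 ≤ v.2.2} =
      {v ∈ Cset p q | (∑ i, v.1 i) + 2 * (1 - v.2.2) ≤ 1} := by
  set V := (Fin (p - 1) → ℝ) × (Fin (q - 1) → ℝ) × ℝ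
  -- Characterization of the image of f₁
  have himg : fmap p q 1 '' Cset p q =
      {v : V | (∀ i, 0 ≤ v.1 i) ∧ (∑ i, v.1 i) ≤ 1 ∧ (∀ j, v.2.1 j ∈ Icc (0 : ℝ) 1) ∧
        0 ≤ v.2.2 ∧ v.2.2 ≤ ((∑ i, v.1 i) + 1) / 2} := by
    ext w
    constructor
    · rintro ⟨v, ⟨hx, hs, hy, hz0, hz1⟩, rfl⟩
      have hsn : (0:ℝ) ≤ ∑ i, v.1 i := Finset.sum_nonneg fun i _ => hx i
      refine ⟨hx, hs, hy, ?_, ?_⟩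
      · simp only [fmap]
        nlinarith
      · simp only [fmap]
        nlinarith
    · rintro ⟨hx, hs, hy, hz0, hz1⟩
      have hsn : (0:ℝ) ≤ ∑ i, w.1 i := Finset.sum_nonneg fun i _ => hx i
      have hpos : (0:ℝ) < (∑ i, w.1 i) + 1 := by linarith
      refine ⟨(w.1, w.2.1, 2 * w.2.2 / ((∑ i, w.1 i) + 1)), ⟨hx, hs, hy, ?_, ?_⟩, ?_⟩
      · positivity
      · rw [div_le_one hpos]; linarith
      · show (w.1, w.2.1, _) = w
        have : 2 * w.2.2 / ((∑ i, w.1 i) + 1) * (1 + ((∑ i, w.1 i) - 1) * 1 / 2) = w.2.2 := by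
          field_simp
          ring
        simp only [fmap, this]
  have hS : Cset p q \ (fmap p q 1 '' Cset p q) =
      {v : V | v ∈ Cset p q ∧ ((∑ i, v.1 i) + 1) / 2 < v.2.2} := by
    rw [himg]; ext v
    simp only [mem_diff, mem_setOf_eq]
    constructor
    · rintro ⟨hv, hni⟩
      obtain ⟨hx, hs, hy, hz0, hz1⟩ := hv
      refine ⟨⟨hx, hs, hy, hz0, hz1⟩, ?_⟩
      by_contra h
      push_neg at h
      exact hni ⟨hx, hs, hy, hz0, h⟩
    · rintro ⟨hv, hlt⟩
      obtain ⟨hx, hs, hy, hz0, hz1⟩ := hv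
      exact ⟨⟨hx, hs, hy, hz0, hz1⟩, fun h => absurd h.2.2.2.2 (not_le.mpr hlt)⟩
  -- Continuity facts
  have hc1 : ∀ i, Continuous fun v : V => v.1 i := fun i =>
    (continuous_apply i).comp continuous_fst
  have hcs : Continuous fun v : V => ∑ i, v.1 i :=
    continuous_finset_sum _ fun i _ => hc1 i
  have hcy : ∀ j, Continuous fun v : V => v.2.1 j := fun j =>
    (continuous_apply j).comp (continuous_fst.comp continuous_snd)
  have hcz : Continuous fun v : V => v.2.2 := continuous_snd.comp continuous_snd
  have hCclosed : IsClosed (Cset p q) := by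
    have hrw : Cset p q = (⋂ i, {v : V | 0 ≤ v.1 i}) ∩ {v : V | (∑ i, v.1 i) ≤ 1} ∩
        (⋂ j, {v : V | v.2.1 j ∈ Icc (0:ℝ) 1}) ∩ {v : V | v.2.2 ∈ Icc (0:ℝ) 1} := by
      ext v
      simp only [Cset, mem_setOf_eq, mem_inter_iff, mem_iInter]
      tauto
    rw [hrw]
    refine IsClosed.inter (IsClosed.inter (IsClosed.inter ?_ ?_) ?_) ?_
    · exact isClosed_iInter fun i => isClosed_le continuous_const (hc1 i)
    · exact isClosed_le hcs continuous_const
    · exact isClosed_iInter fun j => isClosed_Icc.preimage (hcy j)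
    · exact isClosed_Icc.preimage hcz
  have hEclosed : IsClosed {v : V | v ∈ Cset p q ∧ 1 / 2 + (∑ i, v.1 i) / 2 ≤ v.2.2} := by
    have : {v : V | v ∈ Cset p q ∧ 1 / 2 + (∑ i, v.1 i) / 2 ≤ v.2.2} =
        Cset p q ∩ {v : V | 1 / 2 + (∑ i, v.1 i) / 2 ≤ v.2.2} := rfl
    rw [this]
    exact hCclosed.inter (isClosed_le (continuous_const.add (hcs.div_const 2)) hcz)
  constructor
  · apply le_antisymm
    · apply closure_minimal _ hEclosed
      rw [hS]
      rintro v ⟨hv, hlt⟩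
      exact ⟨hv, by linarith⟩
    · rintro v ⟨hv, hle⟩
      obtain ⟨hx, hs, hy, hz0, hz1⟩ := hv
      have hsn : (0:ℝ) ≤ ∑ i, v.1 i := Finset.sum_nonneg fun i _ => hx i
      rw [hS]
      rw [mem_closure_iff_seq_limit]
      set ε : ℕ → ℝ := fun n => ((n:ℝ) + 1)⁻¹ with hε
      have hεpos : ∀ n, 0 < ε n := fun n => by positivity
      have hεle : ∀ n, ε n ≤ 1 := fun n => by
        rw [hε]
        rw [inv_le_one_iff₀]
        right; linarith [Nat.cast_nonneg (α := ℝ) n]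
      have hεtend : Filter.Tendsto ε Filter.atTop (nhds 0) :=
        tendsto_one_div_add_atTop_nhds_zero_nat.congr fun n => by
          rw [hε]; rw [one_div]
      refine ⟨fun n => (fun i => (1 - ε n) * v.1 i, v.2.1, min (v.2.2 + ε n / 2) 1),
        fun n => ?_, ?_⟩
      · have hεp := hεpos n
        have hεl := hεle n
        have hsum : ∑ i, (1 - ε n) * v.1 i = (1 - ε n) * ∑ i, v.1 i := by
          rw [Finset.mul_sum]
        refine ⟨⟨fun i => mul_nonneg (by linarith) (hx i), ?_, hy, ?_, min_le_right _ _⟩, ?_⟩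
        · rw [hsum]; nlinarith
        · exact le_min (by linarith) zero_le_one
        · show (∑ i, (1 - ε n) * v.1 i + 1) / 2 < min (v.2.2 + ε n / 2) 1
          rw [hsum]
          rcases le_or_gt (v.2.2 + ε n / 2) 1 with h | h
          · rw [min_eq_left h]; nlinarith
          · rw [min_eq_right h.le]; nlinarith
      · refine Filter.Tendsto.prodMk_nhds ?_ (Filter.Tendsto.prodMk_nhds tendsto_const_nhds ?_)
        · rw [tendsto_pi_nhds]
          intro i
          have : Filter.Tendsto (fun n => (1 - ε n) * v.1 i) Filter.atTop
              (nhds ((1 - 0) * v.1 i)) :=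
            ((tendsto_const_nhds.sub hεtend).mul tendsto_const_nhds)
          simpa using this
        · have : Filter.Tendsto (fun n => min (v.2.2 + ε n / 2) 1) Filter.atTop
              (nhds (min (v.2.2 + 0 / 2) 1)) :=
            Filter.Tendsto.min (tendsto_const_nhds.add (hεtend.div_const 2))
              tendsto_const_nhds
          simpa [min_eq_left hz1] using this
  · ext v
    simp only [mem_setOf_eq, and_congr_right_iff]
    intro _
    constructor <;> intro <;> linarith
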